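/- Let Σ be a smooth rank-k horizontal distribution on an open set U ⊆ ℝ^m. For every point p ∈ U and every vector v ∈ Σ_p there exist ε > 0 and a smooth nonholonomic geodesic γ : (−ε, ε) → U with γ(0) = p and γ'(0) = v; moreover the nonholonomic geodesic with these initial conditions is unique, in the sense that any two nonholonomic geodesics with the same initial point and the same initial velocity coincide on the intersection of their domains. -/

import Mathlib

open Set MeasureTheory
open scoped RealInnerProductSpace ENNReal

/-- A smooth rank-`k` horizontal distribution `Σ` on an open set `U ⊆ ℝ^m`, described by the
field of orthogonal projections `P p` of `ℝ^m` onto the subspace `Σ_p`. -/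
structure HorDistrib (m k : ℕ) where
  U : Set (EuclideanSpace ℝ (Fin m))
  isOpen_U : IsOpen U
  one_le_k : 1 ≤ k
  k_lt_m : k < m
  P : EuclideanSpace ℝ (Fin m) → EuclideanSpace ℝ (Fin m) →L[ℝ] EuclideanSpace ℝ (Fin m)
  smooth_P : ContDiffOn ℝ (⊤ : ℕ∞) P U
  idem : ∀ p ∈ U, ∀ v, P p (P p v) = P p v
  selfAdjoint : ∀ p ∈ U, ∀ v w, ⟪P p v, w⟫ = ⟪v, P p w⟫
  rank : ∀ p ∈ U, Module.finrank ℝ (LinearMap.range (P p).toLinearMap) = k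

variable {m k : ℕ}

/-- The plane `Σ_p` of the distribution at `p`, as a subset of `ℝ^m`. -/
def HorDistrib.sigmaAt (D : HorDistrib m k) (p : EuclideanSpace ℝ (Fin m)) :
    Set (EuclideanSpace ℝ (Fin m)) := {v | D.P p v = v}

/-- `γ` is a (smooth) nonholonomic geodesic on the open set `I ⊆ ℝ`:  it is horizontal
(`γ' s ∈ Σ_{γ s}`) and `P_{γ s} (γ'' s) = 0`. -/
def IsNhGeodesicOn (D : HorDistrib m k) (γ : ℝ → EuclideanSpace ℝ (Fin m)) (I : Set ℝ) : Prop :=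
  IsOpen I ∧ (∀ s ∈ I, γ s ∈ D.U) ∧ ContDiffOn ℝ (⊤ : ℕ∞) γ I ∧
  (∀ s ∈ I, D.P (γ s) (deriv γ s) = deriv γ s) ∧
  (∀ s ∈ I, D.P (γ s) (deriv (deriv γ) s) = 0)

/-- A nonholonomic geodesic segment, parametrized on the closed interval `[c,d]`. -/
def IsGeodesicSegment (D : HorDistrib m k) (δ : ℝ → EuclideanSpace ℝ (Fin m)) (c d : ℝ) :
    Prop :=
  c ≤ d ∧ (∀ s ∈ Icc c d, δ s ∈ D.U) ∧ ContDiffOn ℝ (⊤ : ℕ∞) δ (Icc c d) ∧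
  (c < d →
    (∀ s ∈ Icc c d, D.P (δ s) (derivWithin δ (Icc c d) s) = derivWithin δ (Icc c d) s) ∧
    (∀ s ∈ Icc c d, D.P (δ s) (derivWithin (derivWithin δ (Icc c d)) (Icc c d) s) = 0))

/-- The length of a smooth segment. -/
noncomputable def segLength (δ : ℝ → EuclideanSpace ℝ (Fin m)) (c d : ℝ) : ℝ :=
  ∫ s in c..d, ‖derivWithin δ (Icc c d) s‖

/-- A broken geodesic: a concatenation of finitely many nonholonomic geodesic segments,
with break points `t 0 ≤ t 1 ≤ ⋯ ≤ t n`. -/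
def IsBrokenGeodesic (D : HorDistrib m k) (γ : ℝ → EuclideanSpace ℝ (Fin m))
    (n : ℕ) (t : Fin (n + 1) → ℝ) : Prop :=
  Monotone t ∧ ∀ i : Fin n, IsGeodesicSegment D γ (t i.castSucc) (t i.succ)

/-- The length of a broken geodesic. -/
noncomputable def brokenLength (γ : ℝ → EuclideanSpace ℝ (Fin m)) (n : ℕ)
    (t : Fin (n + 1) → ℝ) : ℝ :=
  ∑ i : Fin n, segLength γ (t i.castSucc) (t i.succ)

/-- Two points are joined by a broken geodesic. -/
def JoinedByBrokenGeodesic (D : HorDistrib m k) (p q : EuclideanSpace ℝ (Fin m)) : Prop :=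
  ∃ (n : ℕ) (γ : ℝ → EuclideanSpace ℝ (Fin m)) (t : Fin (n + 1) → ℝ),
    IsBrokenGeodesic D γ n t ∧ γ (t 0) = p ∧ γ (t (Fin.last n)) = q

/-- The distance `d_H`: the infimum of the lengths of broken geodesics joining `p` to `q`. -/
noncomputable def dH (D : HorDistrib m k) (p q : EuclideanSpace ℝ (Fin m)) : ℝ≥0∞ :=
  sInf {L | ∃ (n : ℕ) (γ : ℝ → EuclideanSpace ℝ (Fin m)) (t : Fin (n + 1) → ℝ),
    IsBrokenGeodesic D γ n t ∧ γ (t 0) = p ∧ γ (t (Fin.last n)) = q ∧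
    L = ENNReal.ofReal (brokenLength γ n t)}

/-- `γ` is an absolutely continuous horizontal curve on `[c,d]` with a.e. derivative `g`. -/
def IsHorizontalAC (D : HorDistrib m k) (γ g : ℝ → EuclideanSpace ℝ (Fin m)) (c d : ℝ) :
    Prop :=
  c ≤ d ∧ IntegrableOn g (Icc c d) ∧
  (∀ s ∈ Icc c d, γ s = γ c + ∫ r in c..s, g r) ∧
  (∀ s ∈ Icc c d, γ s ∈ D.U) ∧
  (∀ᵐ s ∂(volume.restrict (Icc c d)), D.P (γ s) (g s) = g s)

/-- The Carnot–Carathéodory distance: the infimum of the lengths of absolutely continuous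
horizontal curves joining `p` to `q`. -/
noncomputable def dc (D : HorDistrib m k) (p q : EuclideanSpace ℝ (Fin m)) : ℝ≥0∞ :=
  sInf {L | ∃ (γ g : ℝ → EuclideanSpace ℝ (Fin m)) (c d : ℝ),
    IsHorizontalAC D γ g c d ∧ γ c = p ∧ γ d = q ∧
    L = ENNReal.ofReal (∫ s in c..d, ‖g s‖)}

/-- A (smooth) section of the distribution `Σ`. -/
def IsSection (D : HorDistrib m k) (V : EuclideanSpace ℝ (Fin m) → EuclideanSpace ℝ (Fin m)) :
    Prop :=
  ContDiffOn ℝ (⊤ : ℕ∞) V D.U ∧ ∀ p ∈ D.U, D.P p (V p) = V p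

/-- The Lie bracket of two vector fields on `ℝ^m`. -/
noncomputable def lieBracket (X Y : EuclideanSpace ℝ (Fin m) → EuclideanSpace ℝ (Fin m)) :
    EuclideanSpace ℝ (Fin m) → EuclideanSpace ℝ (Fin m) :=
  fun p => fderiv ℝ Y p (X p) - fderiv ℝ X p (Y p)

/-- `IsIterBracket D j V` :  `V` is an iterated Lie bracket of exactly `j` sections of `Σ`. -/
inductive IsIterBracket (D : HorDistrib m k) :
    ℕ → (EuclideanSpace ℝ (Fin m) → EuclideanSpace ℝ (Fin m)) → Prop
  | base : ∀ V, IsSection D V → IsIterBracket D 1 V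
  | bracket : ∀ (a b : ℕ) (X Y), IsIterBracket D a X → IsIterBracket D b Y →
      IsIterBracket D (a + b) (lieBracket X Y)

/-- `Σ_i(p)`: the span of the evaluations at `p` of all iterated Lie brackets of at most `i`
sections of `Σ`. -/
noncomputable def sigmaFlag (D : HorDistrib m k) (i : ℕ) (p : EuclideanSpace ℝ (Fin m)) :
    Submodule ℝ (EuclideanSpace ℝ (Fin m)) :=
  Submodule.span ℝ {v | ∃ j ≤ i, ∃ V, IsIterBracket D j V ∧ v = V p}

/-- `Σ` is bracket generating. -/
def BracketGenerating (D : HorDistrib m k) : Prop :=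
  ∀ p ∈ D.U, ∃ l, sigmaFlag D l p = ⊤

/-- `Σ` is regular at `p`, with degree `l` (the least `l` with `Σ_l(p) = ℝ^m`) :  the
dimensions of the flag `Σ_i`, `i ≤ l`, are constant near `p`. -/
def RegularAt (D : HorDistrib m k) (p : EuclideanSpace ℝ (Fin m)) (l : ℕ) : Prop :=
  sigmaFlag D l p = ⊤ ∧ (∀ i < l, sigmaFlag D i p ≠ ⊤) ∧
  ∃ W, IsOpen W ∧ p ∈ W ∧ W ⊆ D.U ∧
    ∀ i ≤ l, ∀ q ∈ W,
      Module.finrank ℝ (sigmaFlag D i q) = Module.finrank ℝ (sigmaFlag D i p)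

/-- `f` is nonholonomically geodesically convex on `Ω`: its restriction to any nonholonomic
geodesic contained in `Ω` is convex. -/
def NConvexOn (D : HorDistrib m k) (Ω : Set (EuclideanSpace ℝ (Fin m)))
    (f : EuclideanSpace ℝ (Fin m) → ℝ) : Prop :=
  ∀ (γ : ℝ → EuclideanSpace ℝ (Fin m)) (a b : ℝ), IsNhGeodesicOn D γ (Ioo a b) →
    (∀ s ∈ Ioo a b, γ s ∈ Ω) → ConvexOn ℝ (Ioo a b) (f ∘ γ)

/-- `Ω` is a nonholonomically geodesically convex set. -/
def NConvexSet (D : HorDistrib m k) (Ω : Set (EuclideanSpace ℝ (Fin m))) : Prop :=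
  ∀ (γ : ℝ → EuclideanSpace ℝ (Fin m)) (a b : ℝ), IsNhGeodesicOn D γ (Ioo a b) →
    ∀ s₁ ∈ Ioo a b, ∀ s₂ ∈ Ioo a b, γ s₁ ∈ Ω → γ s₂ ∈ Ω → ∀ s ∈ Icc s₁ s₂, γ s ∈ Ω
open Filter Topology

/-- Clopen-argument glue: local propagation of equality on a preconnected open set. -/
theorem eqOn_of_local_eq {X : Type*} [TopologicalSpace X] [T2Space X] {f g : ℝ → X} {J : Set ℝ}
    (hJo : IsOpen J) (hJc : IsPreconnected J) (hf : ContinuousOn f J) (hg : ContinuousOn g J)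
    (hloc : ∀ s ∈ J, f s = g s → f =ᶠ[𝓝 s] g) {s₀ : ℝ} (hs₀ : s₀ ∈ J) (h0 : f s₀ = g s₀) :
    EqOn f g J := by
  haveI : PreconnectedSpace J := Subtype.preconnectedSpace hJc
  set S : Set J := {x | f x = g x} with hS
  have hSc : IsClosed S := isClosed_eq hf.restrict hg.restrict
  have hSo : IsOpen S := by
    rw [isOpen_iff_mem_nhds]
    intro x hx
    have hV : {t | f t = g t} ∈ 𝓝 (x : ℝ) := hloc x x.2 hx
    exact continuous_subtype_val.continuousAt.preimage_mem_nhds hV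
  rcases isClopen_iff.1 ⟨hSc, hSo⟩ with h | h
  · exact absurd (h ▸ (show (⟨s₀, hs₀⟩ : J) ∈ S from h0)) (notMem_empty _)
  · intro s hs
    exact (h ▸ (mem_univ (⟨s, hs⟩ : J)) : (⟨s, hs⟩ : J) ∈ S)

namespace NHGeo
variable {m k : ℕ} (D : HorDistrib m k)

local notation "E" => EuclideanSpace ℝ (Fin m)

/-- The derivative field of `P`. -/
noncomputable def dP (D : HorDistrib m k) : E → E →L[ℝ] E →L[ℝ] E := fderiv ℝ D.P

lemma smooth_dP : ContDiffOn ℝ (⊤ : ℕ∞) (dP D) D.U :=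
  D.smooth_P.fderiv_of_isOpen D.isOpen_U (by simp)

lemma contDiffAt_P {q : E} (hq : q ∈ D.U) : ContDiffAt ℝ (⊤ : ℕ∞) D.P q :=
  D.smooth_P.contDiffAt (D.isOpen_U.mem_nhds hq)

lemma hasFDerivAt_P {q : E} (hq : q ∈ D.U) : HasFDerivAt D.P (dP D q) q :=
  ((contDiffAt_P D hq).differentiableAt (by simp)).hasFDerivAt

/-- Key identity: `P ∘ dP[u] ∘ P = 0` on `U`. -/
lemma P_dP_P {q : E} (hq : q ∈ D.U) (u w : E) :
    D.P q (dP D q u (D.P q w)) = 0 := by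
  -- differentiate x ↦ P x (P x w) = P x w on U
  have hP := hasFDerivAt_P D hq
  have h1 : HasFDerivAt (fun x => D.P x (D.P x w))
      ((D.P q).comp ((dP D q).flip w) + (dP D q).flip (D.P q w)) q := by
    have hu : HasFDerivAt (fun x => D.P x w) ((dP D q).flip w) q := by
      have := hP.clm_apply (hasFDerivAt_const w q)
      simpa using this
    exact hP.clm_apply hu
  have h2 : HasFDerivAt (fun x => D.P x w) ((dP D q).flip w) q := by
    have := hP.clm_apply (hasFDerivAt_const w q)
    simpa using this
  have heq : (fun x => D.P x (D.P x w)) =ᶠ[𝓝 q] (fun x => D.P x w) :=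
    eventually_of_mem (D.isOpen_U.mem_nhds hq) (fun x hx => D.idem x hx w)
  have := (h1.congr_of_eventuallyEq heq.symm).unique h2
  have hder : D.P q (dP D q u w) + dP D q u (D.P q w) = dP D q u w := by
    have := congrArg (fun (L : E →L[ℝ] E) => L u) this
    simpa [ContinuousLinearMap.add_apply] using this
  have happ := congrArg (D.P q) hder
  rw [map_add, D.idem q hq] at happ
  rwa [add_eq_left] at happ
  
/-- The geodesic vector field on phase space. -/
noncomputable def F (D : HorDistrib m k) : E × E → E × E :=
  fun z => (z.2, dP D z.1 z.2 z.2)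

lemma smooth_F : ContDiffOn ℝ (⊤ : ℕ∞) (F D) (D.U ×ˢ (univ : Set E)) := by
  apply ContDiffOn.prodMk
  · exact contDiff_snd.contDiffOn
  · have h1 : ContDiffOn ℝ (⊤ : ℕ∞) (fun z : E × E => dP D z.1) (D.U ×ˢ (univ : Set E)) :=
      (smooth_dP D).comp contDiff_fst.contDiffOn (fun z hz => hz.1)
    exact (h1.clm_apply contDiff_snd.contDiffOn).clm_apply contDiff_snd.contDiffOn

lemma contDiffAt_F {z : E × E} (hz : z.1 ∈ D.U) : ContDiffAt ℝ 1 (F D) z := by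
  have hmem : D.U ×ˢ (univ : Set E) ∈ 𝓝 z :=
    (D.isOpen_U.prod isOpen_univ).mem_nhds ⟨hz, mem_univ _⟩
  exact ((smooth_F D).contDiffAt hmem).of_le (by simp)

/-- A geodesic gives a solution of the first-order system `z' = F z`. -/
lemma geodesic_system {γ : ℝ → E} {a b : ℝ} (hγ : IsNhGeodesicOn D γ (Ioo a b)) :
    ∀ s ∈ Ioo a b, HasDerivAt (fun t => (γ t, deriv γ t)) (F D (γ s, deriv γ s)) s := by
  obtain ⟨hop, hU, hsm, hhor, hgeo⟩ := hγ
  intro s hs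
  have hnhds : Ioo a b ∈ 𝓝 s := hop.mem_nhds hs
  have hγ1 : HasDerivAt γ (deriv γ s) s :=
    ((hsm.differentiableOn (by simp)).differentiableAt hnhds).hasDerivAt
  have hd2 : ContDiffOn ℝ (⊤ : ℕ∞) (deriv γ) (Ioo a b) :=
    hsm.deriv_of_isOpen hop (by simp)
  have hγ2 : HasDerivAt (deriv γ) (deriv (deriv γ) s) s :=
    ((hd2.differentiableOn (by simp)).differentiableAt hnhds).hasDerivAt
  -- compute deriv (deriv γ) s
  have hlhs : HasDerivAt (fun t => D.P (γ t) (deriv γ t))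
      (dP D (γ s) (deriv γ s) (deriv γ s) + D.P (γ s) (deriv (deriv γ) s)) s := by
    have hc : HasDerivAt (fun t => D.P (γ t)) (dP D (γ s) (deriv γ s)) s :=
      (hasFDerivAt_P D (hU s hs)).comp_hasDerivAt s hγ1
    exact hc.clm_apply hγ2
  have heq : (fun t => D.P (γ t) (deriv γ t)) =ᶠ[𝓝 s] (deriv γ) :=
    eventually_of_mem hnhds (fun t ht => hhor t ht)
  have h2 : deriv (deriv γ) s
      = dP D (γ s) (deriv γ s) (deriv γ s) + D.P (γ s) (deriv (deriv γ) s) := by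
    have := (hlhs.congr_of_eventuallyEq heq.symm).unique hγ2
    exact this.symm
  have h3 : deriv (deriv γ) s = dP D (γ s) (deriv γ s) (deriv γ s) := by
    rw [h2, hgeo s hs, add_zero]
  exact hγ1.prodMk (h3 ▸ hγ2)

/-- Local uniqueness for the system. -/
lemma system_local_unique {z₁ z₂ : ℝ → E × E} {J : Set ℝ} (hJ : IsOpen J)
    (h₁ : ∀ t ∈ J, HasDerivAt z₁ (F D (z₁ t)) t) (h₂ : ∀ t ∈ J, HasDerivAt z₂ (F D (z₂ t)) t)
    {s₀ : ℝ} (hs₀ : s₀ ∈ J) (hU : (z₁ s₀).1 ∈ D.U) (heq : z₁ s₀ = z₂ s₀) :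
    z₁ =ᶠ[𝓝 s₀] z₂ := by
  obtain ⟨K, t, htmem, hlip⟩ := (contDiffAt_F D hU).exists_lipschitzOnWith
  have hc₁ : ContinuousAt z₁ s₀ := (h₁ s₀ hs₀).continuousAt
  have hc₂ : ContinuousAt z₂ s₀ := (h₂ s₀ hs₀).continuousAt
  have hm₁ : ∀ᶠ s in 𝓝 s₀, z₁ s ∈ t := hc₁.preimage_mem_nhds htmem
  have hm₂ : ∀ᶠ s in 𝓝 s₀, z₂ s ∈ t := by
    rw [heq] at htmem; exact hc₂.preimage_mem_nhds htmem
  have hJev : ∀ᶠ s in 𝓝 s₀, s ∈ J := hJ.mem_nhds hs₀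
  refine ODE_solution_unique_of_eventually (v := fun _ => F D) (s := fun _ => t)
    (Filter.Eventually.of_forall fun _ => hlip) ?_ ?_ heq
  · filter_upwards [hm₁, hJev] with s h1 h2; exact ⟨h₁ s h2, h1⟩
  · filter_upwards [hm₂, hJev] with s h1 h2; exact ⟨h₂ s h2, h1⟩

/-- Local vanishing for a linear ODE `h' = A t (h t)` with continuous coefficient. -/
lemma linear_ODE_local_zero {X : Type*} [NormedAddCommGroup X] [NormedSpace ℝ X]
    {A : ℝ → X →L[ℝ] X} {h : ℝ → X} {J : Set ℝ} (hJ : IsOpen J)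
    (hA : ContinuousOn A J) (hh : ∀ t ∈ J, HasDerivAt h (A t (h t)) t)
    {s₀ : ℝ} (hs₀ : s₀ ∈ J) (h0 : h s₀ = 0) : h =ᶠ[𝓝 s₀] (fun _ => 0) := by
  obtain ⟨r, hr, hball⟩ := Metric.isOpen_iff.1 hJ s₀ hs₀
  set δ := r / 2 with hδ
  have hδ0 : 0 < δ := half_pos hr
  have hIccJ : Icc (s₀ - δ) (s₀ + δ) ⊆ J := by
    refine subset_trans ?_ hball
    intro x hx
    rw [Metric.mem_ball, Real.dist_eq, abs_lt]
    obtain ⟨h1, h2⟩ := hx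
    constructor <;> simp only [hδ] at * <;> linarith
  set c : ℝ → ℝ := fun t => max (s₀ - δ) (min t (s₀ + δ)) with hc
  have hcmem : ∀ t, c t ∈ Icc (s₀ - δ) (s₀ + δ) := by
    intro t
    constructor
    · exact le_max_left _ _
    · exact max_le (by linarith) (min_le_right _ _)
  obtain ⟨C, hC⟩ := isCompact_Icc.exists_bound_of_continuousOn (hA.mono hIccJ)
  set K : NNReal := ⟨max C 0, le_max_right _ _⟩ with hK
  have hlip : ∀ t : ℝ, LipschitzOnWith K (fun y => A (c t) y) univ := by
    intro t
    refine ((A (c t)).lipschitz.weaken ?_).lipschitzOnWith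
    have := hC (c t) (hcmem t)
    rw [← NNReal.coe_le_coe]
    show ‖A (c t)‖ ≤ max C 0
    exact this.trans (le_max_left C 0)
  have hcev : ∀ᶠ t in 𝓝 s₀, c t = t := by
    have : Ioo (s₀ - δ) (s₀ + δ) ∈ 𝓝 s₀ := Ioo_mem_nhds (by linarith) (by linarith)
    filter_upwards [this] with t ht
    simp only [hc]
    rw [min_eq_left ht.2.le, max_eq_right ht.1.le]
  have hJev : ∀ᶠ t in 𝓝 s₀, t ∈ J := hJ.mem_nhds hs₀
  refine ODE_solution_unique_of_eventually (v := fun t y => A (c t) y)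
    (s := fun _ => univ) (Filter.Eventually.of_forall hlip) ?_ ?_ h0
  · filter_upwards [hcev, hJev] with t h1 h2
    refine ⟨?_, mem_univ _⟩
    rw [h1]
    exact hh t h2
  · filter_upwards [] with t
    exact ⟨by simpa using hasDerivAt_const t (0 : X), mem_univ _⟩

/-- Smoothness bootstrap for solutions of `z' = F z`. -/
lemma solution_smooth {z : ℝ → E × E} {I : Set ℝ} (hI : IsOpen I)
    (hz : ∀ t ∈ I, HasDerivAt z (F D (z t)) t) (hU : ∀ t ∈ I, (z t).1 ∈ D.U) :
    ContDiffOn ℝ (⊤ : ℕ∞) z I := by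
  have hderiv : ∀ t ∈ I, deriv z t = F D (z t) := fun t ht => (hz t ht).deriv
  have hmaps : MapsTo z I (D.U ×ˢ (univ : Set E)) := fun t ht => ⟨hU t ht, mem_univ _⟩
  have key : ∀ n : ℕ, ContDiffOn ℝ n z I := by
    intro n
    induction n with
    | zero =>
      simp only [CharP.cast_eq_zero, contDiffOn_zero]
      exact fun t ht => ((hz t ht).continuousAt).continuousWithinAt
    | succ n ih =>
      rw [show ((n + 1 : ℕ) : WithTop ℕ∞) = (n : WithTop ℕ∞) + 1 by norm_cast,
        contDiffOn_succ_iff_deriv_of_isOpen hI]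
      refine ⟨fun t ht => ((hz t ht).differentiableAt).differentiableWithinAt, by simp, ?_⟩
      refine ContDiffOn.congr ?_ hderiv
      exact ((smooth_F D).of_le (by exact_mod_cast le_top)).comp ih hmaps
  exact contDiffOn_infty.mpr key

/-- Existence of a local nonholonomic geodesic. -/
lemma exists_geodesic {p : E} (hp : p ∈ D.U) {v : E} (hv : D.P p v = v) :
    ∃ ε > (0 : ℝ), ∃ γ : ℝ → E,
      IsNhGeodesicOn D γ (Ioo (-ε) ε) ∧ γ 0 = p ∧ deriv γ 0 = v := by
  obtain ⟨f, hf0, ε₀, hε₀, hfd⟩ :=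
    ContDiffAt.exists_forall_mem_closedBall_exists_eq_forall_mem_Ioo_hasDerivAt₀
      (contDiffAt_F D (show ((p, v) : E × E).1 ∈ D.U from hp)) (0 : ℝ)
  -- shrink so that the first component stays in U
  have hcont : ContinuousAt f 0 :=
    (hfd 0 (by constructor <;> simp [hε₀] <;> linarith)).continuousAt
  have hUnhds : (D.U ×ˢ (univ : Set E)) ∈ 𝓝 ((p, v) : E × E) :=
    (D.isOpen_U.prod isOpen_univ).mem_nhds ⟨hp, mem_univ _⟩
  have hpre : f ⁻¹' (D.U ×ˢ (univ : Set E)) ∈ 𝓝 (0 : ℝ) := by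
    rw [← hf0] at hUnhds
    exact hcont.preimage_mem_nhds hUnhds
  obtain ⟨ε₁, hε₁, hball⟩ := Metric.mem_nhds_iff.1 hpre
  set ε := min ε₀ (ε₁ / 2) with hε
  have hεpos : 0 < ε := lt_min hε₀ (by linarith)
  set I := Ioo (-ε) ε with hI
  have hIsub : I ⊆ Ioo (0 - ε₀) (0 + ε₀) := by
    intro t ht
    constructor
    · have := ht.1; have : -ε₀ ≤ -ε := by simp [hε]
      simp only [zero_sub]; linarith [ht.1]
    · have := ht.2; have : ε ≤ ε₀ := min_le_left _ _
      simp only [zero_add]; linarith [ht.2]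
  have hf : ∀ t ∈ I, HasDerivAt f (F D (f t)) t := fun t ht => hfd t (hIsub ht)
  have hIU : ∀ t ∈ I, (f t).1 ∈ D.U := by
    intro t ht
    have : t ∈ Metric.ball (0 : ℝ) ε₁ := by
      rw [Metric.mem_ball, Real.dist_eq, sub_zero, abs_lt]
      have h1 := ht.1; have h2 := ht.2
      have : ε ≤ ε₁ / 2 := min_le_right _ _
      constructor <;> linarith
    exact (hball this).1
  set γ : ℝ → E := fun t => (f t).1 with hγdef
  set w : ℝ → E := fun t => (f t).2 with hwdef
  have hI0 : (0 : ℝ) ∈ I := by constructor <;> simp [hεpos] <;> linarith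
  have hIopen : IsOpen I := isOpen_Ioo
  have hγ' : ∀ t ∈ I, HasDerivAt γ (w t) t := fun t ht =>
    (ContinuousLinearMap.fst ℝ E E).hasFDerivAt.comp_hasDerivAt t (hf t ht)
  have hw' : ∀ t ∈ I, HasDerivAt w (dP D (γ t) (w t) (w t)) t := fun t ht =>
    (ContinuousLinearMap.snd ℝ E E).hasFDerivAt.comp_hasDerivAt t (hf t ht)
  have hdγ : ∀ t ∈ I, deriv γ t = w t := fun t ht => (hγ' t ht).deriv
  -- smoothness
  have hfsm : ContDiffOn ℝ (⊤ : ℕ∞) f I := solution_smooth D hIopen hf hIU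
  have hγsm : ContDiffOn ℝ (⊤ : ℕ∞) γ I := contDiff_fst.comp_contDiffOn hfsm
  -- horizontality via the linear ODE
  set h : ℝ → E := fun t => D.P (γ t) (w t) - w t with hhdef
  set A : ℝ → E →L[ℝ] E := fun t => -((D.P (γ t)).comp (dP D (γ t) (w t))) with hAdef
  have hh' : ∀ t ∈ I, HasDerivAt h (A t (h t)) t := by
    intro t ht
    have hc : HasDerivAt (fun s => D.P (γ s)) (dP D (γ t) (w t)) t :=
      (hasFDerivAt_P D (hIU t ht)).comp_hasDerivAt t (hγ' t ht)
    have hPw : HasDerivAt (fun s => D.P (γ s) (w s))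
        (dP D (γ t) (w t) (w t) + D.P (γ t) (dP D (γ t) (w t) (w t))) t :=
      hc.clm_apply (hw' t ht)
    have hhd : HasDerivAt h (D.P (γ t) (dP D (γ t) (w t) (w t))) t := by
      have := hPw.sub (hw' t ht)
      rw [show D.P (γ t) (dP D (γ t) (w t) (w t)) = dP D (γ t) (w t) (w t) +
        D.P (γ t) (dP D (γ t) (w t) (w t)) - dP D (γ t) (w t) (w t) by abel]
      exact this
    convert hhd using 1
    have key := P_dP_P D (hIU t ht) (w t) (w t)
    simp only [hAdef, hhdef, ContinuousLinearMap.neg_apply, ContinuousLinearMap.comp_apply,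
      map_sub]
    rw [key]
    simp
  have hAc : ContinuousOn A I := by
    have hγc : ContinuousOn γ I := fun t ht => (hγ' t ht).continuousAt.continuousWithinAt
    have hwc : ContinuousOn w I := fun t ht => (hw' t ht).continuousAt.continuousWithinAt
    have h1 : ContinuousOn (fun t => D.P (γ t)) I :=
      (D.smooth_P.continuousOn.comp hγc hIU)
    have h2 : ContinuousOn (fun t => dP D (γ t) (w t)) I :=
      ((smooth_dP D).continuousOn.comp hγc hIU).clm_apply hwc
    exact (h1.clm_comp h2).neg
  have hzero : EqOn h (fun _ => (0 : E)) I := by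
    refine eqOn_of_local_eq hIopen isPreconnected_Ioo
      (fun t ht => (hh' t ht).continuousAt.continuousWithinAt) continuousOn_const
      ?_ hI0 ?_
    · intro s hs hs0
      exact linear_ODE_local_zero hIopen hAc hh' hs hs0
    · simp only [hhdef, hγdef, hwdef, hf0, hv, sub_self]
  have hhor : ∀ t ∈ I, D.P (γ t) (w t) = w t := by
    intro t ht
    have := hzero ht
    simpa [hhdef, sub_eq_zero] using this
  refine ⟨ε, hεpos, γ, ⟨hIopen, hIU, hγsm, ?_, ?_⟩, by simp [hγdef, hf0], ?_⟩
  · intro s hs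
    rw [hdγ s hs]
    exact hhor s hs
  · intro s hs
    have hev : deriv γ =ᶠ[𝓝 s] w := eventually_of_mem (hIopen.mem_nhds hs) hdγ
    have : deriv (deriv γ) s = dP D (γ s) (w s) (w s) := by
      rw [hev.deriv_eq]
      exact (hw' s hs).deriv
    rw [this]
    have := P_dP_P D (hIU s hs) (w s) (w s)
    rw [hhor s hs] at this
    exact this
  · rw [hdγ 0 hI0]
    simp [hwdef, hf0]

end NHGeo

/-- Local existence and uniqueness of nonholonomic geodesics with prescribed
initial point `p ∈ U` and initial velocity `v ∈ Σ_p`. -/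
theorem exists_unique_nonholonomic_geodesic {m k : ℕ} (D : HorDistrib m k)
    (p : EuclideanSpace ℝ (Fin m)) (hp : p ∈ D.U)
    (v : EuclideanSpace ℝ (Fin m)) (hv : v ∈ D.sigmaAt p) :
    (∃ ε > (0 : ℝ), ∃ γ : ℝ → EuclideanSpace ℝ (Fin m),
      IsNhGeodesicOn D γ (Ioo (-ε) ε) ∧ γ 0 = p ∧ deriv γ 0 = v) ∧
    (∀ (γ₁ γ₂ : ℝ → EuclideanSpace ℝ (Fin m)) (a₁ b₁ a₂ b₂ : ℝ),
      IsNhGeodesicOn D γ₁ (Ioo a₁ b₁) → IsNhGeodesicOn D γ₂ (Ioo a₂ b₂) →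
      (0 : ℝ) ∈ Ioo a₁ b₁ → (0 : ℝ) ∈ Ioo a₂ b₂ →
      γ₁ 0 = γ₂ 0 → deriv γ₁ 0 = deriv γ₂ 0 →
      ∀ s ∈ Ioo a₁ b₁ ∩ Ioo a₂ b₂, γ₁ s = γ₂ s) := by
  constructor
  · exact NHGeo.exists_geodesic D hp hv
  · intro γ₁ γ₂ a₁ b₁ a₂ b₂ hg₁ hg₂ h0₁ h0₂ heq heq'
    set J := Ioo a₁ b₁ ∩ Ioo a₂ b₂ with hJ
    have hJIoo : J = Ioo (max a₁ a₂) (min b₁ b₂) := Ioo_inter_Ioo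
    have hJopen : IsOpen J := hJIoo ▸ isOpen_Ioo
    have hJconn : IsPreconnected J := hJIoo ▸ isPreconnected_Ioo
    have h0J : (0 : ℝ) ∈ J := ⟨h0₁, h0₂⟩
    set z₁ : ℝ → EuclideanSpace ℝ (Fin m) × EuclideanSpace ℝ (Fin m) :=
      fun t => (γ₁ t, deriv γ₁ t) with hz₁
    set z₂ : ℝ → EuclideanSpace ℝ (Fin m) × EuclideanSpace ℝ (Fin m) :=
      fun t => (γ₂ t, deriv γ₂ t) with hz₂
    have hsys₁ : ∀ t ∈ J, HasDerivAt z₁ (NHGeo.F D (z₁ t)) t :=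
      fun t ht => NHGeo.geodesic_system D hg₁ t ht.1
    have hsys₂ : ∀ t ∈ J, HasDerivAt z₂ (NHGeo.F D (z₂ t)) t :=
      fun t ht => NHGeo.geodesic_system D hg₂ t ht.2
    have hz0 : z₁ 0 = z₂ 0 := by simp [hz₁, hz₂, heq, heq']
    have hall : EqOn z₁ z₂ J := by
      refine eqOn_of_local_eq hJopen hJconn
        (fun t ht => (hsys₁ t ht).continuousAt.continuousWithinAt)
        (fun t ht => (hsys₂ t ht).continuousAt.continuousWithinAt)
        ?_ h0J hz0
      intro s hs hss
      exact NHGeo.system_local_unique D hJopen hsys₁ hsys₂ hs (hg₁.2.1 s hs.1) hss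
    intro s hs
    exact congrArg Prod.fst (hall hs)
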